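/- Let F_i ∈ ℚ[Y] be defined by F_0(Y) = Y − 1 and F_{i+1}(Y) = (Y² − Y) · Y · F_i′(Y), and let f(2,i) be the coefficient of Y^{2i} in F_i. Then for every i ≥ 1, f(2,i) = −(2i−2)!! · [1 + Σ_{k=1}^{i−1} (2k+1)!!/(2k)!!], where (2k)!! = 2·4⋯(2k) with 0!! = 1 and (2k+1)!! = 1·3·5⋯(2k+1). -/

import Mathlib

open Nat Polynomial

noncomputable def F : ℕ → Polynomial ℚ
  | 0 => Polynomial.X - 1
  | i + 1 =>
      (Polynomial.X ^ 2 - Polynomial.X) * (Polynomial.X * Polynomial.derivative (F i))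

lemma natDegree_F (i : ℕ) : (F i).natDegree ≤ 2 * i + 1 := by
  induction i with
  | zero => simpa [F] using (natDegree_X_sub_C (1:ℚ)).le
  | succ n ih =>
    show ((X ^ 2 - X) * (X * derivative (F n))).natDegree ≤ 2 * (n+1) + 1
    calc ((X ^ 2 - X) * (X * derivative (F n))).natDegree
        ≤ (X ^ 2 - X : ℚ[X]).natDegree + (X * derivative (F n)).natDegree :=
          natDegree_mul_le
      _ ≤ 2 + (1 + (2*n)) := by
          gcongr
          · exact (natDegree_sub_le _ _).trans (by simp)
          · calc (X * derivative (F n)).natDegree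
                ≤ (X:ℚ[X]).natDegree + (derivative (F n)).natDegree := natDegree_mul_le
              _ ≤ 1 + (2*n) := by
                  gcongr
                  · simp
                  · exact (natDegree_derivative_le _).trans (by omega)
      _ ≤ 2 * (n+1) + 1 := by omega

lemma coeff_F_top (i n : ℕ) (h : 2 * i + 1 < n) : (F i).coeff n = 0 :=
  coeff_eq_zero_of_natDegree_lt (lt_of_le_of_lt (natDegree_F i) h)

lemma coeff_F_succ (i m : ℕ) :
    (F (i+1)).coeff (m+3) =
      (F i).coeff (m+1) * (m+1) - (F i).coeff (m+2) * (m+2) := by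
  show ((X ^ 2 - X) * (X * derivative (F i))).coeff (m+3) = _
  have h : (X ^ 2 - X : ℚ[X]) * (X * derivative (F i)) =
      X ^ 3 * derivative (F i) - X ^ 2 * derivative (F i) := by ring
  rw [h, coeff_sub, coeff_X_pow_mul _ 3 m,
    show m + 3 = (m+1) + 2 from by omega, coeff_X_pow_mul _ 2 (m+1),
    coeff_derivative, coeff_derivative]
  push_cast
  ring

lemma dfac_odd (i : ℕ) : ((2*i+1)‼ : ℚ) = (2*i+1) * ((2*i-1)‼ : ℚ) := by
  cases i with
  | zero => norm_num
  | succ n =>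
    rw [show 2*(n+1)+1 = (2*n+1) + 2 from by omega, Nat.doubleFactorial_add_two,
      show 2*(n+1)-1 = 2*n+1 from by omega]
    push_cast; ring

lemma lead_F (i : ℕ) : (F i).coeff (2*i+1) = ((2*i-1)‼ : ℚ) := by
  induction i with
  | zero => simp [F, Polynomial.coeff_one]
  | succ n ih =>
    rw [show 2*(n+1)+1 = (2*n) + 3 from by omega, coeff_F_succ n (2*n),
      show 2*n+1 = 2*n+1 from rfl, ih, coeff_F_top n (2*n+2) (by omega),
      show 2*(n+1)-1 = 2*n+1 from by omega, dfac_odd n]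
    push_cast; ring

/-- For every `i ≥ 1`, the coefficient `f(2,i)` of `Y^{2i}` in `F_i` equals
`−(2i−2)!! · [1 + Σ_{k=1}^{i−1} (2k+1)!!/(2k)!!]`. -/
theorem f_two_sum_formula (i : ℕ) (hi : 1 ≤ i) :
    (F i).coeff (2 * i) =
      -(((2 * i - 2)‼ : ℚ) *
        (1 + ∑ k ∈ Finset.Icc 1 (i - 1), (((2 * k + 1)‼ : ℚ) / ((2 * k)‼ : ℚ)))) := by
  induction i, hi using Nat.le_induction with
  | base =>
    have hF1 : F 1 = X^3 - X^2 := by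
      show (X ^ 2 - X) * (X * derivative (X - 1 : ℚ[X])) = _
      simp; ring
    rw [show (2*1 : ℕ) = 2 from rfl, hF1]
    simp [coeff_sub, coeff_X_pow]
  | succ i hi ih =>
    obtain ⟨j, rfl⟩ := Nat.exists_eq_add_of_le hi
    have h3 : 2 * (1 + j + 1) = (2*j+1) + 3 := by omega
    rw [h3, coeff_F_succ, show 2*j+1+1 = 2*(1+j) from by omega,
      show 2*j+1+2 = 2*(1+j)+1 from by omega, ih, lead_F]
    rw [show (2*j+1+3-2 : ℕ) = 2*j + 2 from by omega,
      show 2 * (1 + j) - 2 = 2*j from by omega,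
      show 2 * (1 + j) - 1 = 2*j + 1 from by omega,
      show (1 + j - 1 : ℕ) = j from by omega,
      show (1 + j + 1 - 1 : ℕ) = j + 1 from by omega]
    rw [Finset.sum_Icc_succ_top (by omega : 1 ≤ j + 1)]
    have hd2 : ((2*j+2)‼ : ℚ) = (2*j+2) * ((2*j)‼ : ℚ) := by
      rw [Nat.doubleFactorial_add_two]; push_cast; ring
    have hdo : ((2*j+2+1)‼ : ℚ) = (2*j+3) * ((2*j+1)‼ : ℚ) := by
      rw [show 2*j+2+1 = (2*j+1)+2 from by omega, Nat.doubleFactorial_add_two]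
      push_cast; ring
    have hne : ((2*j)‼ : ℚ) ≠ 0 := by positivity
    rw [show (2*(j+1) : ℕ) = 2*j+2 from by omega, hd2, hdo, dfac_odd j]
    field_simp
    push_cast
    ring
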